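/- Let (X_t) be adapted with E[X_t|F_{t−1}] = μ ∈ ℝ^d, E[‖X_t‖²|F_{t−1}] ≤ v' < ∞, and let (λ_t) be positive predictable scalars. Then for each fixed θ ∈ ℝ^d, the process S_t(θ) = Π_{i≤t} exp{ λ_i⟨θ, X_i − μ⟩ − (λ_i²/2)⟨θ, X_i − μ⟩² − (λ_i²/3)‖θ‖²·v' } is a nonnegative supermartingale. -/

import Mathlib

open MeasureTheory ProbabilityTheory
open scoped RealInnerProductSpace

lemma delyon_aux (x : ℝ) :
    HasDerivAt (fun y : ℝ => Real.log (1 + y + y^2/3) - y + y^2/2)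
      (x * ((x+1)^2 + 1) / (3 * (1 + x + x^2/3))) x := by
  have hq : 0 < 1 + x + x^2/3 := by nlinarith [sq_nonneg (x + 3/2)]
  have h1 : HasDerivAt (fun y : ℝ => 1 + y + y^2/3) (1 + 2*x/3) x := by
    have := ((hasDerivAt_id x).const_add (1:ℝ)).add ((hasDerivAt_pow 2 x).div_const 3)
    refine this.congr_deriv ?_
    push_cast
    ring
  have h2 : HasDerivAt (fun y : ℝ => Real.log (1 + y + y^2/3))
      ((1 + 2*x/3) / (1 + x + x^2/3)) x := h1.log hq.ne'
  have h3 := (h2.sub (hasDerivAt_id x)).add ((hasDerivAt_pow 2 x).div_const 2)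
  refine h3.congr_deriv ?_
  norm_num
  rw [div_sub' hq.ne', div_add' _ _ _ hq.ne', div_eq_div_iff hq.ne' (by positivity)]
  ring

lemma delyon (x : ℝ) : Real.exp (x - x^2/2) ≤ 1 + x + x^2/3 := by
  have hq : ∀ y : ℝ, 0 < 1 + y + y^2/3 := fun y => by nlinarith [sq_nonneg (y + 3/2)]
  set f : ℝ → ℝ := fun y => Real.log (1 + y + y^2/3) - y + y^2/2 with hf
  have hd : ∀ y : ℝ, HasDerivAt f (y * ((y+1)^2 + 1) / (3 * (1 + y + y^2/3))) y := delyon_aux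
  have hdiff : Differentiable ℝ f := fun y => (hd y).differentiableAt
  have hf0 : f 0 = 0 := by simp [hf]
  have key : 0 ≤ f x := by
    rcases le_total 0 x with hx | hx
    · have hmono : MonotoneOn f (Set.Ici 0) := by
        refine monotoneOn_of_deriv_nonneg (convex_Ici 0) hdiff.continuous.continuousOn
          hdiff.differentiableOn ?_
        intro y hy
        rw [interior_Ici] at hy
        rw [(hd y).deriv]
        have : (0:ℝ) ≤ y := le_of_lt hy
        positivity
      have := hmono (Set.self_mem_Ici) (Set.mem_Ici.2 hx) hx
      rwa [hf0] at this
    · have hmono : AntitoneOn f (Set.Iic 0) := by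
        refine antitoneOn_of_deriv_nonpos (convex_Iic 0) hdiff.continuous.continuousOn
          hdiff.differentiableOn ?_
        intro y hy
        rw [interior_Iic] at hy
        rw [(hd y).deriv]
        apply div_nonpos_of_nonpos_of_nonneg
        · have hy' : y ≤ 0 := le_of_lt hy
          nlinarith [sq_nonneg (y+1)]
        · nlinarith [sq_nonneg (y + 3/2)]
      have := hmono (Set.mem_Iic.2 hx) (Set.self_mem_Iic) hx
      rwa [hf0] at this
  have hlog : x - x^2/2 ≤ Real.log (1 + x + x^2/3) := by
    simp only [hf] at key; linarith
  calc Real.exp (x - x^2/2) ≤ Real.exp (Real.log (1 + x + x^2/3)) := Real.exp_le_exp.2 hlog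
    _ = 1 + x + x^2/3 := Real.exp_log (hq x)

lemma condexp_const_inner {Ω E : Type*} {m m0 : MeasurableSpace Ω} (hm : m ≤ m0)
    {P : Measure Ω} [IsProbabilityMeasure P]
    [NormedAddCommGroup E] [InnerProductSpace ℝ E] [CompleteSpace E]
    {X : Ω → E} (hX : Integrable X P) (c : E) {μc : E}
    (h : P[X|m] =ᵐ[P] fun _ => μc) :
    P[fun ω => ⟪c, X ω⟫|m] =ᵐ[P] fun _ => ⟪c, μc⟫ := by
  haveI : SigmaFinite (P.trim hm) := by infer_instance
  refine (ae_eq_condExp_of_forall_setIntegral_eq hm (hX.const_inner c)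
    (fun s _ hμs => (integrableOn_const hμs.ne))
    (fun s hs hμs => ?_)
    (aestronglyMeasurable_const )).symm
  have hXs : ∫ ω in s, X ω ∂P = (P s).toReal • μc := by
    rw [← setIntegral_condExp hm hX hs]
    calc ∫ ω in s, (P[X|m]) ω ∂P = ∫ _ω in s, μc ∂P :=
          setIntegral_congr_ae (hm s hs) (h.mono fun ω hω _ => hω)
      _ = (P s).toReal • μc := by simp [Measure.real]
  calc ∫ _x in s, ⟪c, μc⟫ ∂P = (P s).toReal • ⟪c, μc⟫ := by simp [Measure.real]
    _ = ⟪c, (P s).toReal • μc⟫ := by rw [real_inner_smul_right]; rfl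
    _ = ⟪c, ∫ ω in s, X ω ∂P⟫ := by rw [hXs]
    _ = ∫ ω in s, ⟪c, X ω⟫ ∂P := (integral_inner hX.integrableOn c).symm


theorem delyon_supermartingale {d : ℕ} {Ω : Type*} {m0 : MeasurableSpace Ω}
    (P : Measure Ω) [IsProbabilityMeasure P]
    (ℱ : Filtration ℕ m0)
    -- `X i` is the (i+1)-st observation, measurable at time i+1
    (X : ℕ → Ω → EuclideanSpace ℝ (Fin d))
    (hadap : ∀ i, StronglyMeasurable[ℱ (i + 1)] (X i))
    (μ : EuclideanSpace ℝ (Fin d))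
    (hcmean : ∀ i, P[X i | ℱ i] =ᵐ[P] fun _ => μ)
    (v' : ℝ)
    (hsqint : ∀ i, Integrable (fun ω => ‖X i ω‖ ^ 2) P)
    (hcsq : ∀ i, P[fun ω => ‖X i ω‖ ^ 2 | ℱ i] ≤ᵐ[P] fun _ => v')
    -- positive predictable scalars
    (lam : ℕ → Ω → ℝ)
    (hlammeas : ∀ i, Measurable[ℱ i] (lam i))
    (hlampos : ∀ i ω, 0 < lam i ω)
    (θ : EuclideanSpace ℝ (Fin d)) :
    Supermartingale
      (fun t ω => ∏ i ∈ Finset.range t,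
        Real.exp (lam i ω * ⟪θ, X i ω - μ⟫
          - (lam i ω) ^ 2 / 2 * ⟪θ, X i ω - μ⟫ ^ 2
          - (lam i ω) ^ 2 / 3 * ‖θ‖ ^ 2 * v')) ℱ P ∧
    ∀ t ω, 0 ≤ ∏ i ∈ Finset.range t,
        Real.exp (lam i ω * ⟪θ, X i ω - μ⟫
          - (lam i ω) ^ 2 / 2 * ⟪θ, X i ω - μ⟫ ^ 2
          - (lam i ω) ^ 2 / 3 * ‖θ‖ ^ 2 * v') := by
  classical
  have hm : ∀ t, ℱ t ≤ m0 := fun t => ℱ.le t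
  haveI hae_ne : (MeasureTheory.ae P).NeBot := ae_neBot.2 (IsProbabilityMeasure.ne_zero P)
  set Y : ℕ → Ω → ℝ := fun i ω => ⟪θ, X i ω - μ⟫ with hYdef
  set g : ℕ → Ω → ℝ := fun i ω => lam i ω * Y i ω - (lam i ω) ^ 2 / 2 * (Y i ω) ^ 2
      - (lam i ω) ^ 2 / 3 * ‖θ‖ ^ 2 * v' with hgdef
  suffices h : Supermartingale (fun t ω => ∏ i ∈ Finset.range t, Real.exp (g i ω)) ℱ P ∧
      ∀ t ω, 0 ≤ ∏ i ∈ Finset.range t, Real.exp (g i ω) by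
    simpa only [hgdef, hYdef] using h
  set S : ℕ → Ω → ℝ := fun t ω => ∏ i ∈ Finset.range t, Real.exp (g i ω) with hSdef
  -- basic measurability
  have hYsm : ∀ i, StronglyMeasurable[ℱ (i+1)] (Y i) := fun i =>
    (continuous_const.inner continuous_id).comp_stronglyMeasurable
      ((hadap i).sub stronglyMeasurable_const)
  have hlam' : ∀ i, Measurable[ℱ (i+1)] (lam i) := fun i =>
    (hlammeas i).mono (ℱ.mono i.le_succ) le_rfl
  have hgsm : ∀ i, StronglyMeasurable[ℱ (i+1)] (g i) := by
    intro i
    apply Measurable.stronglyMeasurable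
    exact (((hlam' i).mul (hYsm i).measurable).sub
      ((((hlam' i).pow_const 2).div_const 2).mul ((hYsm i).measurable.pow_const 2))).sub
      ((((hlam' i).pow_const 2).div_const 3).mul_const _ |>.mul_const _)
  have hSsm : ∀ t, StronglyMeasurable[ℱ t] (S t) := by
    intro t
    apply Measurable.stronglyMeasurable
    apply Finset.measurable_prod
    intro i hi
    have hit : ℱ (i+1) ≤ ℱ t := ℱ.mono (Finset.mem_range.mp hi)
    exact Real.measurable_exp.comp (((hgsm i).measurable).mono hit le_rfl)
  -- nonnegativity of v'
  have hv' : 0 ≤ v' := by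
    have h₁ : (0:Ω → ℝ) ≤ᵐ[P] P[fun ω => ‖X 0 ω‖ ^ 2|ℱ 0] :=
      condExp_nonneg (ae_of_all _ fun ω => sq_nonneg _)
    obtain ⟨ω, h0, h1⟩ := (h₁.and (hcsq 0)).exists
    exact le_trans h0 h1
  -- pointwise bound on g
  have hgb : ∀ i ω, g i ω ≤ 1/2 := by
    intro i ω
    simp only [hgdef]
    have hc : 0 ≤ lam i ω ^ 2 / 3 * ‖θ‖ ^ 2 * v' := by positivity
    nlinarith [sq_nonneg (lam i ω * Y i ω - 1), hc]
  have hSnn : ∀ t ω, 0 ≤ S t ω := fun t ω =>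
    Finset.prod_nonneg fun i _ => (Real.exp_pos _).le
  have hSb : ∀ t ω, S t ω ≤ Real.exp ((t : ℝ) * (1/2)) := by
    intro t ω
    have : S t ω = Real.exp (∑ i ∈ Finset.range t, g i ω) := by
      rw [Real.exp_sum]
    rw [this]
    apply Real.exp_le_exp.2
    calc ∑ i ∈ Finset.range t, g i ω ≤ ∑ _i ∈ Finset.range t, (1/2 : ℝ) :=
          Finset.sum_le_sum fun i _ => hgb i ω
      _ = (t : ℝ) * (1/2) := by rw [Finset.sum_const, Finset.card_range, nsmul_eq_mul]
  have hSint : ∀ t, Integrable (S t) P := by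
    intro t
    refine Integrable.mono' (integrable_const (Real.exp ((t : ℝ) * (1/2))))
      (((hSsm t).mono (hm t)).aestronglyMeasurable) (ae_of_all _ fun ω => ?_)
    rw [Real.norm_eq_abs, abs_of_nonneg (hSnn t ω)]
    exact hSb t ω
  -- integrability of X and friends
  have hXint : ∀ i, Integrable (X i) P := by
    intro i
    refine Integrable.mono' ((hsqint i).add (integrable_const 1))
      (((hadap i).mono (hm (i+1))).aestronglyMeasurable) (ae_of_all _ fun ω => ?_)
    simp only [Pi.add_apply]
    have := sq_nonneg (‖X i ω‖ - 1)
    nlinarith [norm_nonneg (X i ω)]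
  have hXmuint : ∀ i, Integrable (fun ω => X i ω - μ) P := fun i =>
    (hXint i).sub (integrable_const μ)
  have hnormint : ∀ i, Integrable (fun ω => ‖X i ω - μ‖) P := fun i => (hXmuint i).norm
  have hXmuasm : ∀ i, AEStronglyMeasurable (fun ω => X i ω - μ) P := fun i =>
    (hXmuint i).aestronglyMeasurable
  have hnormsqint : ∀ i, Integrable (fun ω => ‖X i ω - μ‖ ^ 2) P := by
    intro i
    have hasm : AEStronglyMeasurable (fun ω => ‖X i ω - μ‖ ^ 2) P := by
      have := (hXmuasm i).norm
      have h2 : (fun ω => ‖X i ω - μ‖ ^ 2) = fun ω => ‖X i ω - μ‖ * ‖X i ω - μ‖ := by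
        funext ω; ring
      rw [h2]; exact this.mul this
    refine Integrable.mono' (((hsqint i).const_mul 2).add (integrable_const (2 * ‖μ‖^2)))
      hasm (ae_of_all _ fun ω => ?_)
    simp only [Pi.add_apply]
    rw [Real.norm_eq_abs, abs_of_nonneg (sq_nonneg _)]
    have h1 : ‖X i ω - μ‖ ≤ ‖X i ω‖ + ‖μ‖ := norm_sub_le _ _
    nlinarith [norm_nonneg (X i ω - μ), norm_nonneg (X i ω), norm_nonneg μ,
      sq_nonneg (‖X i ω‖ - ‖μ‖)]
  have hYabs : ∀ i ω, |Y i ω| ≤ ‖θ‖ * ‖X i ω - μ‖ := fun i ω =>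
    abs_real_inner_le_norm θ (X i ω - μ)
  have hYint : ∀ i, Integrable (Y i) P := by
    intro i
    refine Integrable.mono' ((hnormint i).const_mul ‖θ‖)
      (((hYsm i).mono (hm (i+1))).aestronglyMeasurable) (ae_of_all _ fun ω => ?_)
    rw [Real.norm_eq_abs]
    exact hYabs i ω
  have hY2b : ∀ i ω, (Y i ω) ^ 2 ≤ ‖θ‖ ^ 2 * ‖X i ω - μ‖ ^ 2 := by
    intro i ω
    have h := hYabs i ω
    have h2 : (Y i ω)^2 = |Y i ω|^2 := (sq_abs _).symm
    rw [h2]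
    nlinarith [abs_nonneg (Y i ω), mul_nonneg (norm_nonneg θ) (norm_nonneg (X i ω - μ))]
  have hY2int : ∀ i, Integrable (fun ω => (Y i ω) ^ 2) P := by
    intro i
    refine Integrable.mono' ((hnormsqint i).const_mul (‖θ‖^2))
      ((((hYsm i).mono (hm (i+1))).aestronglyMeasurable).mul
        (((hYsm i).mono (hm (i+1))).aestronglyMeasurable) |>.congr ?_)
      (ae_of_all _ fun ω => ?_)
    · exact ae_of_all _ fun ω => by simp [Pi.mul_apply, pow_two]
    · rw [Real.norm_eq_abs, abs_of_nonneg (sq_nonneg _)]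
      exact hY2b i ω
  -- conditional mean of Y is 0
  have hcondY : ∀ i, P[Y i|ℱ i] =ᵐ[P] fun _ => (0:ℝ) := by
    intro i
    have h1 : P[fun ω => ⟪θ, X i ω⟫|ℱ i] =ᵐ[P] fun _ => ⟪θ, μ⟫ :=
      condexp_const_inner (hm i) (hXint i) θ (hcmean i)
    calc P[Y i|ℱ i]
        =ᵐ[P] P[(fun ω => ⟪θ, X i ω⟫) - fun _ => ⟪θ, μ⟫|ℱ i] :=
          condExp_congr_ae (ae_of_all _ fun ω => by
            simp [hYdef, inner_sub_right, Pi.sub_apply])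
      _ =ᵐ[P] P[fun ω => ⟪θ, X i ω⟫|ℱ i] - P[fun _ : Ω => ⟪θ, μ⟫|ℱ i] :=
          condExp_sub ((hXint i).const_inner θ) (integrable_const _) _
      _ =ᵐ[P] fun _ => (0:ℝ) := by
          rw [condExp_const (hm i)]
          filter_upwards [h1] with ω hω
          simp only [Pi.sub_apply]
          rw [hω, sub_self]
  -- conditional second moment of ‖X - μ‖ is ≤ v'
  have hcondnormsq : ∀ i, P[fun ω => ‖X i ω - μ‖ ^ 2|ℱ i] ≤ᵐ[P] fun _ => v' := by
    intro i
    have hinner : P[fun ω => ⟪μ, X i ω⟫|ℱ i] =ᵐ[P] fun _ => ⟪μ, μ⟫ :=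
      condexp_const_inner (hm i) (hXint i) μ (hcmean i)
    have hBint : Integrable (fun ω => 2 * ⟪μ, X i ω⟫) P :=
      ((hXint i).const_inner μ).const_mul 2
    have hB : P[fun ω => 2 * ⟪μ, X i ω⟫|ℱ i] =ᵐ[P] fun _ => 2 * ‖μ‖ ^ 2 := by
      calc P[fun ω => 2 * ⟪μ, X i ω⟫|ℱ i]
          =ᵐ[P] P[(2:ℝ) • fun ω => ⟪μ, X i ω⟫|ℱ i] :=
            condExp_congr_ae (ae_of_all _ fun ω => by simp [Pi.smul_apply])
        _ =ᵐ[P] (2:ℝ) • P[fun ω => ⟪μ, X i ω⟫|ℱ i] := condExp_smul _ _ _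
        _ =ᵐ[P] fun _ => 2 * ‖μ‖ ^ 2 := by
            filter_upwards [hinner] with ω hω
            simp only [Pi.smul_apply, smul_eq_mul]
            rw [hω, real_inner_self_eq_norm_sq]
    have hsplit : (fun ω => ‖X i ω - μ‖ ^ 2) =
        ((fun ω => ‖X i ω‖ ^ 2) - fun ω => 2 * ⟪μ, X i ω⟫) + fun _ => ‖μ‖ ^ 2 := by
      funext ω
      simp only [Pi.add_apply, Pi.sub_apply]
      rw [norm_sub_sq_real, real_inner_comm (X i ω) μ]
    calc P[fun ω => ‖X i ω - μ‖ ^ 2|ℱ i]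
        =ᵐ[P] P[(fun ω => ‖X i ω‖ ^ 2) - fun ω => 2 * ⟪μ, X i ω⟫|ℱ i]
            + P[fun _ : Ω => ‖μ‖ ^ 2|ℱ i] := by
          rw [hsplit]
          exact condExp_add ((hsqint i).sub hBint) (integrable_const _) _
      _ ≤ᵐ[P] fun _ => v' := by
          have hsub := condExp_sub (μ := P) (hsqint i) hBint (ℱ i)
          rw [condExp_const (hm i)]
          filter_upwards [hsub, hB, hcsq i] with ω h1 h2 h3
          simp only [Pi.add_apply, Pi.sub_apply] at *
          rw [h1, h2]
          linarith [sq_nonneg ‖μ‖]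
  -- integrability of exp(g)
  have hexpint : ∀ t, Integrable (fun ω => Real.exp (g t ω)) P := by
    intro t
    refine Integrable.mono' (integrable_const (Real.exp (1/2)))
      ((Real.continuous_exp.comp_stronglyMeasurable ((hgsm t).mono (hm (t+1)))).aestronglyMeasurable)
      (ae_of_all _ fun ω => ?_)
    rw [Real.norm_eq_abs, abs_of_nonneg (Real.exp_pos _).le]
    exact Real.exp_le_exp.2 (hgb t ω)
  -- THE KEY STEP
  have hone : ∀ t, P[fun ω => Real.exp (g t ω)|ℱ t] ≤ᵐ[P] fun _ => (1:ℝ) := by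
    intro t
    rcases eq_or_lt_of_le (mul_nonneg (sq_nonneg ‖θ‖) hv') with hzero | hpos
    · -- degenerate case : ‖θ‖² * v' = 0
      have hgz : g t =ᵐ[P] fun _ => (0:ℝ) := by
        rcases mul_eq_zero.1 hzero.symm with hθ | hv0
        · have hθ0 : θ = 0 := norm_eq_zero.1 ((pow_eq_zero_iff (two_ne_zero)).1 hθ)
          refine ae_of_all _ fun ω => ?_
          simp only [hgdef, hYdef, hθ0, inner_zero_left, norm_zero]
          ring
        · -- v' = 0 forces X t = μ a.e.
          have hnn : (0:Ω→ℝ) ≤ᵐ[P] fun ω => ‖X t ω - μ‖ ^ 2 :=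
            ae_of_all _ fun ω => sq_nonneg _
          have hint0 : ∫ ω, ‖X t ω - μ‖ ^ 2 ∂P = 0 := by
            have h1 : ∫ ω, ‖X t ω - μ‖ ^ 2 ∂P
                = ∫ ω, (P[fun ω => ‖X t ω - μ‖ ^ 2|ℱ t]) ω ∂P :=
              (integral_condExp (hm t)).symm
            have h2 : ∫ ω, (P[fun ω => ‖X t ω - μ‖ ^ 2|ℱ t]) ω ∂P ≤ ∫ _ω, v' ∂P :=
              integral_mono_ae integrable_condExp (integrable_const _) (hcondnormsq t)
            have h3 : 0 ≤ ∫ ω, ‖X t ω - μ‖ ^ 2 ∂P := integral_nonneg fun ω => sq_nonneg _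
            have h4 : ∫ _ω : Ω, v' ∂P = 0 := by simp [hv0]
            linarith [h1, h2, h3, h4]
          have hX0 : (fun ω => ‖X t ω - μ‖ ^ 2) =ᵐ[P] 0 :=
            (integral_eq_zero_iff_of_nonneg_ae hnn (hnormsqint t)).1 hint0
          filter_upwards [hX0] with ω hω
          have hXω : X t ω - μ = 0 := by
            have h5 : ‖X t ω - μ‖ = 0 := by
              have := sq_eq_zero_iff.1 hω
              simpa using this
            exact norm_eq_zero.1 h5
          simp only [hgdef, hYdef, hXω, inner_zero_right, hv0]
          ring
      have hexp1 : (fun ω => Real.exp (g t ω)) =ᵐ[P] fun _ => (1:ℝ) := by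
        filter_upwards [hgz] with ω hω
        rw [hω, Real.exp_zero]
      refine Filter.EventuallyEq.le ?_
      refine (condExp_congr_ae hexp1).trans ?_
      rw [condExp_const (hm t)]
    · -- main case : a := ‖θ‖² * v' > 0
      set a : ℝ := ‖θ‖ ^ 2 * v' with hadef
      set b : ℝ := a / 3 with hbdef
      have hb : 0 < b := by rw [hbdef]; linarith
      set φ : Ω → ℝ := fun ω => Real.exp (-(lam t ω ^ 2 * b)) with hφdef
      have hφpos : ∀ ω, 0 < φ ω := fun ω => Real.exp_pos _
      have hφle1 : ∀ ω, φ ω ≤ 1 := by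
        intro ω
        calc φ ω ≤ Real.exp 0 := Real.exp_le_exp.2 (neg_nonpos.2 (by positivity))
          _ = 1 := Real.exp_zero
      set B : Ω → ℝ := fun ω => lam t ω * φ ω with hBdef
      set C : Ω → ℝ := fun ω => lam t ω ^ 2 / 3 * φ ω with hCdef
      have hBnn : ∀ ω, 0 ≤ B ω := fun ω => mul_nonneg (hlampos t ω).le (hφpos ω).le
      have hCnn : ∀ ω, 0 ≤ C ω := fun ω =>
        mul_nonneg (div_nonneg (sq_nonneg _) (by norm_num)) (hφpos ω).le
      -- bounds on B and C
      have hK1 : ∀ ω, B ω ≤ 1 / (2 * Real.sqrt b) := by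
        intro ω
        have hl : 0 < lam t ω := hlampos t ω
        have hsb : 0 < Real.sqrt b := Real.sqrt_pos.2 hb
        have hsq : Real.sqrt b ^ 2 = b := Real.sq_sqrt hb.le
        have h1 : Real.exp (-(lam t ω ^ 2 * b)) ≤ 1 / (1 + lam t ω ^ 2 * b) := by
          rw [le_div_iff₀ (by positivity)]
          calc Real.exp (-(lam t ω ^ 2 * b)) * (1 + lam t ω ^ 2 * b)
              ≤ Real.exp (-(lam t ω ^ 2 * b)) * Real.exp (lam t ω ^ 2 * b) := by
                refine mul_le_mul_of_nonneg_left ?_ (Real.exp_pos _).le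
                have := Real.add_one_le_exp (lam t ω ^ 2 * b)
                linarith
            _ = 1 := by rw [← Real.exp_add]; simp
        calc B ω ≤ lam t ω * (1 / (1 + lam t ω ^ 2 * b)) := by
              rw [hBdef]
              exact mul_le_mul_of_nonneg_left h1 hl.le
          _ ≤ 1 / (2 * Real.sqrt b) := by
              rw [mul_one_div, div_le_div_iff₀ (by positivity) (by positivity)]
              nlinarith [sq_nonneg (Real.sqrt b * lam t ω - 1)]
      have hK2 : ∀ ω, C ω ≤ 1 / b / 3 := by
        intro ω
        have h1 : lam t ω ^ 2 * b * Real.exp (-(lam t ω ^ 2 * b)) ≤ 1 := by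
          have hx : lam t ω ^ 2 * b ≤ Real.exp (lam t ω ^ 2 * b) := by
            have := Real.add_one_le_exp (lam t ω ^ 2 * b)
            linarith
          calc lam t ω ^ 2 * b * Real.exp (-(lam t ω ^ 2 * b))
              ≤ Real.exp (lam t ω ^ 2 * b) * Real.exp (-(lam t ω ^ 2 * b)) :=
                mul_le_mul_of_nonneg_right hx (Real.exp_pos _).le
            _ = 1 := by rw [← Real.exp_add]; simp
        have h2 : lam t ω ^ 2 * Real.exp (-(lam t ω ^ 2 * b)) ≤ 1 / b := by
          rw [le_div_iff₀ hb]
          calc lam t ω ^ 2 * Real.exp (-(lam t ω ^ 2 * b)) * b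
              = lam t ω ^ 2 * b * Real.exp (-(lam t ω ^ 2 * b)) := by ring
            _ ≤ 1 := h1
        calc C ω = lam t ω ^ 2 * Real.exp (-(lam t ω ^ 2 * b)) / 3 := by
              rw [hCdef, hφdef]; ring
          _ ≤ 1 / b / 3 := by linarith
      -- measurability
      have hφm : Measurable[ℱ t] φ :=
        Real.measurable_exp.comp ((((hlammeas t).pow_const 2).mul_const b).neg)
      have hBsm : StronglyMeasurable[ℱ t] B := ((hlammeas t).mul hφm).stronglyMeasurable
      have hCsm : StronglyMeasurable[ℱ t] C :=
        ((((hlammeas t).pow_const 2).div_const 3).mul hφm).stronglyMeasurable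
      -- integrability
      have hφint : Integrable φ P := by
        refine Integrable.mono' (integrable_const 1)
          ((hφm.mono (hm t) le_rfl).stronglyMeasurable.aestronglyMeasurable)
          (ae_of_all _ fun ω => ?_)
        rw [Real.norm_eq_abs, abs_of_nonneg (hφpos ω).le]
        exact hφle1 ω
      have hBYint : Integrable (fun ω => B ω * Y t ω) P := by
        refine Integrable.mono' (((hnormint t).const_mul ‖θ‖).const_mul (1 / (2 * Real.sqrt b)))
          (((hBsm.mono (hm t)).aestronglyMeasurable).mul
            (((hYsm t).mono (hm (t+1))).aestronglyMeasurable))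
          (ae_of_all _ fun ω => ?_)
        rw [Real.norm_eq_abs, abs_mul]
        have hsb : 0 < Real.sqrt b := Real.sqrt_pos.2 hb
        refine mul_le_mul ?_ (hYabs t ω) (abs_nonneg _) (by positivity)
        rw [abs_of_nonneg (hBnn ω)]
        exact hK1 ω
      have hCY2int : Integrable (fun ω => C ω * Y t ω ^ 2) P := by
        refine Integrable.mono' (((hnormsqint t).const_mul (‖θ‖ ^ 2)).const_mul (1 / b / 3))
          (((hCsm.mono (hm t)).aestronglyMeasurable).mul
            ((((hYsm t).mono (hm (t+1))).aestronglyMeasurable).mul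
              (((hYsm t).mono (hm (t+1))).aestronglyMeasurable) |>.congr
              (ae_of_all _ fun ω => by simp [pow_two])))
          (ae_of_all _ fun ω => ?_)
        rw [Real.norm_eq_abs, abs_mul, abs_of_nonneg (hCnn ω), abs_of_nonneg (sq_nonneg _)]
        refine mul_le_mul (hK2 ω) (hY2b t ω) (sq_nonneg _) (by positivity)
      -- pointwise Delyon bound
      have hpt : ∀ ω, Real.exp (g t ω) ≤ φ ω + B ω * Y t ω + C ω * Y t ω ^ 2 := by
        intro ω
        have hd := delyon (lam t ω * Y t ω)
        have hgeq : g t ω = (lam t ω * Y t ω - (lam t ω * Y t ω) ^ 2 / 2)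
            + (-(lam t ω ^ 2 * b)) := by
          simp only [hgdef, hbdef, hadef]
          ring
        rw [hgeq, Real.exp_add]
        calc Real.exp (lam t ω * Y t ω - (lam t ω * Y t ω) ^ 2 / 2)
              * Real.exp (-(lam t ω ^ 2 * b))
            ≤ (1 + lam t ω * Y t ω + (lam t ω * Y t ω) ^ 2 / 3)
              * Real.exp (-(lam t ω ^ 2 * b)) :=
              mul_le_mul_of_nonneg_right hd (Real.exp_pos _).le
          _ = φ ω + B ω * Y t ω + C ω * Y t ω ^ 2 := by
              simp only [hφdef, hBdef, hCdef]
              ring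
      -- conditional expectation computations
      have hcd : P[fun ω => Real.exp (g t ω)|ℱ t] ≤ᵐ[P]
          P[fun ω => φ ω + B ω * Y t ω + C ω * Y t ω ^ 2|ℱ t] :=
        condExp_mono (hexpint t) ((hφint.add hBYint).add hCY2int) (ae_of_all _ hpt)
      have hφc : P[φ|ℱ t] = φ :=
        condExp_of_stronglyMeasurable (hm t) hφm.stronglyMeasurable hφint
      have hBY : P[fun ω => B ω * Y t ω|ℱ t] =ᵐ[P] B * P[Y t|ℱ t] :=
        condExp_mul_of_stronglyMeasurable_left hBsm hBYint (hYint t)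
      have hCY : P[fun ω => C ω * Y t ω ^ 2|ℱ t] =ᵐ[P] C * P[fun ω => Y t ω ^ 2|ℱ t] :=
        condExp_mul_of_stronglyMeasurable_left hCsm hCY2int (hY2int t)
      have hY2cond : P[fun ω => Y t ω ^ 2|ℱ t] ≤ᵐ[P] fun _ => a := by
        calc P[fun ω => Y t ω ^ 2|ℱ t]
            ≤ᵐ[P] P[fun ω => ‖θ‖ ^ 2 * ‖X t ω - μ‖ ^ 2|ℱ t] :=
              condExp_mono (hY2int t) ((hnormsqint t).const_mul _) (ae_of_all _ (hY2b t))
          _ =ᵐ[P] (‖θ‖ ^ 2 : ℝ) • P[fun ω => ‖X t ω - μ‖ ^ 2|ℱ t] := by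
              have hcsmul := condExp_smul (μ := P) (m := ℱ t) (‖θ‖ ^ 2 : ℝ)
                (fun ω => ‖X t ω - μ‖ ^ 2)
              refine Filter.EventuallyEq.trans ?_ hcsmul
              exact condExp_congr_ae (ae_of_all _ fun ω => by
                simp only [Pi.smul_apply, smul_eq_mul])
          _ ≤ᵐ[P] fun _ => a := by
              filter_upwards [hcondnormsq t] with ω hω
              simp only [Pi.smul_apply, smul_eq_mul, hadef]
              exact mul_le_mul_of_nonneg_left hω (sq_nonneg _)
      have hsplit : P[fun ω => φ ω + B ω * Y t ω + C ω * Y t ω ^ 2|ℱ t] =ᵐ[P]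
          (P[φ|ℱ t] + P[fun ω => B ω * Y t ω|ℱ t]) + P[fun ω => C ω * Y t ω ^ 2|ℱ t] := by
        calc P[fun ω => φ ω + B ω * Y t ω + C ω * Y t ω ^ 2|ℱ t]
            =ᵐ[P] P[(φ + fun ω => B ω * Y t ω) + fun ω => C ω * Y t ω ^ 2|ℱ t] :=
              condExp_congr_ae (ae_of_all _ fun ω => rfl)
          _ =ᵐ[P] P[φ + fun ω => B ω * Y t ω|ℱ t] + P[fun ω => C ω * Y t ω ^ 2|ℱ t] :=
              condExp_add (hφint.add hBYint) hCY2int _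
          _ =ᵐ[P] (P[φ|ℱ t] + P[fun ω => B ω * Y t ω|ℱ t])
              + P[fun ω => C ω * Y t ω ^ 2|ℱ t] :=
              (condExp_add hφint hBYint _).add Filter.EventuallyEq.rfl
      refine hcd.trans (hsplit.trans_le ?_)
      filter_upwards [hBY, hcondY t, hCY, hY2cond] with ω h2 h3 h4 h5
      simp only [Pi.add_apply, Pi.mul_apply] at h2 h4 ⊢
      rw [hφc, h2, h4, h3]
      have hfin : φ ω + C ω * a ≤ 1 := by
        have hx := Real.add_one_le_exp (lam t ω ^ 2 * b)
        calc φ ω + C ω * a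
            = Real.exp (-(lam t ω ^ 2 * b)) * (1 + lam t ω ^ 2 * b) := by
              simp only [hφdef, hCdef, hbdef]
              ring
          _ ≤ Real.exp (-(lam t ω ^ 2 * b)) * Real.exp (lam t ω ^ 2 * b) := by
              refine mul_le_mul_of_nonneg_left (by linarith) (Real.exp_pos _).le
          _ = 1 := by rw [← Real.exp_add]; simp
      have hCa : C ω * (P[fun ω => Y t ω ^ 2|ℱ t]) ω ≤ C ω * a :=
        mul_le_mul_of_nonneg_left h5 (hCnn ω)
      have : B ω * (0:ℝ) = 0 := mul_zero _
      linarith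
  -- one step supermartingale property
  have hstep : ∀ t, P[S (t+1)|ℱ t] ≤ᵐ[P] S t := by
    intro t
    have hrw : S (t+1) = S t * fun ω => Real.exp (g t ω) := by
      funext ω
      simp only [hSdef, Pi.mul_apply]
      exact Finset.prod_range_succ _ _
    have hmul : P[S (t+1)|ℱ t] =ᵐ[P] S t * P[fun ω => Real.exp (g t ω)|ℱ t] := by
      rw [hrw]
      exact condExp_mul_of_stronglyMeasurable_left (hSsm t) (by rw [← hrw]; exact hSint (t+1))
        (hexpint t)
    refine hmul.trans_le ?_
    filter_upwards [hone t] with ω h1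
    calc S t ω * (P[fun ω => Real.exp (g t ω)|ℱ t]) ω ≤ S t ω * 1 :=
          mul_le_mul_of_nonneg_left h1 (hSnn t ω)
      _ = S t ω := mul_one _
  exact ⟨supermartingale_nat (fun t => hSsm t) hSint hstep, hSnn⟩
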